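/- arXiv:2409.12604 — 2 statements merged into one kernel-verified Lean document; each statement's English description precedes it below -/
import Mathlib

section
/- Let H be a symmetric n×n real matrix with an eigenvector v ≠ 0 of eigenvalue λ < 0 (i.e., H.mulVec v = λ • v). Then the set of initial conditions x₀ ∈ ℝⁿ for which the linearized gradient-flow solution t ↦ (exp(-t • H)).mulVec x₀ converges to 0 as t → ∞ is contained in the hyperplane {x : ⟨x, v⟩ = 0}, and hence has Lebesgue measure zero. -/
open Filter Matrix MeasureTheory

lemma exp_mulVec_eigenvector {n : ℕ} (A : Matrix (Fin n) (Fin n) ℝ)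
    (v : Fin n → ℝ) (μ : ℝ) (h : A.mulVec v = μ • v) :
    (NormedSpace.exp A).mulVec v = Real.exp μ • v := by
  letI : SeminormedRing (Matrix (Fin n) (Fin n) ℝ) := Matrix.linftyOpSemiNormedRing
  letI : NormedRing (Matrix (Fin n) (Fin n) ℝ) := Matrix.linftyOpNormedRing
  letI : NormedAlgebra ℝ (Matrix (Fin n) (Fin n) ℝ) := Matrix.linftyOpNormedAlgebra
  have hpow : ∀ k : ℕ, (A ^ k).mulVec v = (μ ^ k) • v := by
    intro k
    induction k with
    | zero => simp
    | succ k ih =>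
        rw [pow_succ, ← Matrix.mulVec_mulVec, h]
        simp [Matrix.mulVec_smul, ih, smul_smul, pow_succ, mul_comm]
  let L : Matrix (Fin n) (Fin n) ℝ →ₗ[ℝ] (Fin n → ℝ) :=
    { toFun := fun B => B.mulVec v
      map_add' := fun B C => Matrix.add_mulVec B C v
      map_smul' := fun c B => Matrix.smul_mulVec c B v }
  let L' : Matrix (Fin n) (Fin n) ℝ →L[ℝ] (Fin n → ℝ) :=
    ⟨L, L.continuous_of_finiteDimensional⟩
  have hsum : HasSum (fun k : ℕ => ((k.factorial : ℝ))⁻¹ • A ^ k) (NormedSpace.exp A) :=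
    NormedSpace.exp_series_hasSum_exp' A
  have h2 : HasSum (fun k : ℕ => ((k.factorial : ℝ))⁻¹ • (μ ^ k) • v)
      ((NormedSpace.exp A).mulVec v) := by
    have := hsum.mapL L'
    simpa [L', L, hpow] using this
  have h3 : HasSum (fun k : ℕ => ((k.factorial : ℝ))⁻¹ • (μ ^ k) • v) (Real.exp μ • v) := by
    have := (NormedSpace.exp_series_hasSum_exp' (𝕂 := ℝ) μ).smul_const v
    rw [← Real.exp_eq_exp_ℝ] at this
    simpa [smul_smul] using this
  exact h2.unique h3

/-- **Gradient flow avoids strict saddles except on a measure-zero set.**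
If `H` is a symmetric real matrix with eigenvector `v ≠ 0` of eigenvalue
`lam < 0`, then the set of initial conditions `x₀` for which the linearized
gradient-flow solution `t ↦ exp (-t • H) *ᵥ x₀` converges to `0` is contained
in the hyperplane `{x | x ⬝ᵥ v = 0}` and has Lebesgue measure zero. -/
theorem gradient_flow_converging_set_measure_zero
    {n : ℕ} (H : Matrix (Fin n) (Fin n) ℝ) (hH : H.IsSymm)
    (v : Fin n → ℝ) (hv : v ≠ 0) (lam : ℝ) (hlam : lam < 0)
    (hev : H.mulVec v = lam • v) :
    {x₀ : Fin n → ℝ |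
        Tendsto (fun t : ℝ => (NormedSpace.exp ((-t) • H)).mulVec x₀) atTop (nhds 0)}
      ⊆ {x : Fin n → ℝ | x ⬝ᵥ v = 0} ∧
    volume {x₀ : Fin n → ℝ |
        Tendsto (fun t : ℝ => (NormedSpace.exp ((-t) • H)).mulVec x₀) atTop (nhds 0)} = 0 := by
  have hdotcont : Continuous (fun w : Fin n → ℝ => w ⬝ᵥ v) := by
    unfold dotProduct
    exact continuous_finset_sum _ fun i _ => (continuous_apply i).mul continuous_const
  have hsub : {x₀ : Fin n → ℝ |
        Tendsto (fun t : ℝ => (NormedSpace.exp ((-t) • H)).mulVec x₀) atTop (nhds 0)}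
      ⊆ {x : Fin n → ℝ | x ⬝ᵥ v = 0} := by
    intro x₀ hx₀
    -- key computation
    have hkey : ∀ t : ℝ, ((NormedSpace.exp ((-t) • H)).mulVec x₀) ⬝ᵥ v
        = Real.exp ((-t) * lam) * (v ⬝ᵥ x₀) := by
      intro t
      have hsymm : (NormedSpace.exp ((-t) • H)).IsSymm := by
        apply Matrix.IsSymm.exp
        exact (hH.smul (-t))
      have heig : ((-t) • H).mulVec v = ((-t) * lam) • v := by
        rw [Matrix.smul_mulVec, hev, smul_smul]
      have hval : (NormedSpace.exp ((-t) • H)).mulVec v = Real.exp ((-t) * lam) • v :=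
        exp_mulVec_eigenvector _ v _ heig
      calc ((NormedSpace.exp ((-t) • H)).mulVec x₀) ⬝ᵥ v
          = v ⬝ᵥ ((NormedSpace.exp ((-t) • H)).mulVec x₀) := by rw [dotProduct_comm]
        _ = ((NormedSpace.exp ((-t) • H))ᵀ.mulVec v) ⬝ᵥ x₀ := by
            rw [Matrix.dotProduct_mulVec, ← Matrix.mulVec_transpose]
        _ = ((NormedSpace.exp ((-t) • H)).mulVec v) ⬝ᵥ x₀ := by rw [hsymm]
        _ = Real.exp ((-t) * lam) * (v ⬝ᵥ x₀) := by rw [hval, smul_dotProduct]; rfl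
    have htend : Tendsto (fun t : ℝ =>
        ((NormedSpace.exp ((-t) • H)).mulVec x₀) ⬝ᵥ v) atTop (nhds 0) := by
      have := hdotcont.continuousAt.tendsto.comp hx₀
      simpa [zero_dotProduct, Function.comp_def] using this
    have hexp : Tendsto (fun t : ℝ => Real.exp (t * lam)) atTop (nhds 0) := by
      apply Real.tendsto_exp_atBot.comp
      exact Tendsto.atTop_mul_const_of_neg hlam tendsto_id
    have hprod : Tendsto (fun t : ℝ => Real.exp (t * lam) *
        (((NormedSpace.exp ((-t) • H)).mulVec x₀) ⬝ᵥ v)) atTop (nhds 0) := by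
      simpa using hexp.mul htend
    have hconst : ∀ t : ℝ, Real.exp (t * lam) *
        (((NormedSpace.exp ((-t) • H)).mulVec x₀) ⬝ᵥ v) = v ⬝ᵥ x₀ := by
      intro t
      rw [hkey t, ← mul_assoc, ← Real.exp_add]
      ring_nf
      simp
    have heqf : (fun t : ℝ => Real.exp (t * lam) *
        (((NormedSpace.exp ((-t) • H)).mulVec x₀) ⬝ᵥ v)) = fun _ => v ⬝ᵥ x₀ :=
      funext hconst
    rw [heqf] at hprod
    have h0 : v ⬝ᵥ x₀ = 0 := tendsto_nhds_unique tendsto_const_nhds hprod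
    simpa [dotProduct_comm] using h0
  refine ⟨hsub, ?_⟩
  apply measure_mono_null hsub
  let φ : (Fin n → ℝ) →ₗ[ℝ] ℝ :=
    { toFun := fun x => x ⬝ᵥ v
      map_add' := fun a b => add_dotProduct a b v
      map_smul' := fun c a => smul_dotProduct c a v }
  have hset : {x : Fin n → ℝ | x ⬝ᵥ v = 0} = (LinearMap.ker φ : Set (Fin n → ℝ)) := rfl
  rw [hset]
  apply Measure.addHaar_submodule
  intro htop
  have hvmem : v ∈ LinearMap.ker φ := htop ▸ Submodule.mem_top
  rw [LinearMap.mem_ker] at hvmem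
  exact hv (by simpa using (dotProduct_self_eq_zero).mp hvmem)
end

section
/- Let E be a finite-dimensional real inner product space, f : E → ℝ differentiable with L-Lipschitz gradient (L > 0), and P : E →L[ℝ] E an orthogonal projection. Suppose ρ > 0, 0 < η ≤ 1/L, and at the point x the projection preserves gradient mass: ‖P(∇f x)‖² ≥ ρ * ‖∇f x‖². Then the update x⁺ = x - η • P(∇f x) satisfies f(x⁺) - f(x) ≤ -(ρ * η / 2) * ‖∇f x‖². -/
open scoped RealInnerProductSpace

/-- Descent lemma: if the gradient is `L`-Lipschitz, then
`f (x + v) ≤ f x + ⟪∇f x, v⟫ + L/2 ‖v‖²`. -/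
lemma descent_lemma_aux
    {E : Type*} [NormedAddCommGroup E] [InnerProductSpace ℝ E] [FiniteDimensional ℝ E]
    (f : E → ℝ) (hf : Differentiable ℝ f)
    (L : ℝ) (hL : 0 < L)
    (hlip : ∀ x y : E, ‖gradient f x - gradient f y‖ ≤ L * ‖x - y‖)
    (x v : E) :
    f (x + v) ≤ f x + ⟪gradient f x, v⟫ + L / 2 * ‖v‖ ^ 2 := by
  set g : ℝ → ℝ := fun t => f (x + t • v) - t * ⟪gradient f x, v⟫ - L * t ^ 2 / 2 * ‖v‖ ^ 2
    with hg
  have hderiv : ∀ t : ℝ, HasDerivAt g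
      (⟪gradient f (x + t • v), v⟫ - ⟪gradient f x, v⟫ - L * t * ‖v‖ ^ 2) t := by
    intro t
    have h1 : HasDerivAt (fun t : ℝ => x + t • v) v t := by
      simpa using ((hasDerivAt_id t).smul_const v).const_add x
    have h2 : HasFDerivAt f (InnerProductSpace.toDual ℝ E (gradient f (x + t • v)))
        (x + t • v) := (hf (x + t • v)).hasGradientAt
    have h3 : HasDerivAt (fun t : ℝ => f (x + t • v)) ⟪gradient f (x + t • v), v⟫ t := by
      have := h2.comp_hasDerivAt t h1
      simpa [Function.comp_def] using this
    have h4 : HasDerivAt (fun t : ℝ => t * ⟪gradient f x, v⟫) ⟪gradient f x, v⟫ t := by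
      simpa using (hasDerivAt_id t).mul_const (⟪gradient f x, v⟫)
    have h5 : HasDerivAt (fun t : ℝ => L * t ^ 2 / 2 * ‖v‖ ^ 2) (L * t * ‖v‖ ^ 2) t := by
      have : HasDerivAt (fun t : ℝ => t ^ 2) (2 * t) t := by
        simpa using hasDerivAt_pow 2 t
      have := ((this.const_mul L).div_const 2).mul_const (‖v‖ ^ 2)
      rw [show L * t * ‖v‖ ^ 2 = L * (2 * t) / 2 * ‖v‖ ^ 2 by ring]
      exact this
    exact (h3.sub h4).sub h5
  have hanti : AntitoneOn g (Set.Icc 0 1) := by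
    apply antitoneOn_of_deriv_nonpos (convex_Icc 0 1)
    · exact fun t _ => (hderiv t).continuousAt.continuousWithinAt
    · intro t ht
      exact (hderiv t).differentiableAt.differentiableWithinAt
    · intro t ht
      rw [(hderiv t).deriv]
      have ht' : 0 ≤ t := le_of_lt (Set.mem_Ioo.mp (by simpa using ht)).1
      have hcs : ⟪gradient f (x + t • v) - gradient f x, v⟫ ≤
          ‖gradient f (x + t • v) - gradient f x‖ * ‖v‖ :=
        real_inner_le_norm _ _
      have hl : ‖gradient f (x + t • v) - gradient f x‖ ≤ L * (t * ‖v‖) := by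
        have := hlip (x + t • v) x
        simpa [norm_smul, abs_of_nonneg ht'] using this
      have : ⟪gradient f (x + t • v), v⟫ - ⟪gradient f x, v⟫ ≤ L * t * ‖v‖ ^ 2 := by
        have h6 : ⟪gradient f (x + t • v) - gradient f x, v⟫ ≤ L * (t * ‖v‖) * ‖v‖ :=
          hcs.trans (mul_le_mul_of_nonneg_right hl (norm_nonneg v))
        rw [inner_sub_left] at h6
        nlinarith [norm_nonneg v]
      linarith
  have := hanti (Set.left_mem_Icc.mpr zero_le_one) (Set.right_mem_Icc.mpr zero_le_one)
      zero_le_one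
  simp only [hg, one_smul, zero_smul, add_zero, one_pow, mul_one] at this
  nlinarith [this]

/-- **Per-step guarantee of curvature-aware subspace descent.**
If `f` has an `L`-Lipschitz gradient, `P` is an orthogonal projection,
`0 < η ≤ 1/L`, and the projection preserves gradient mass at `x`
(`‖P (∇f x)‖² ≥ ρ ‖∇f x‖²` with `ρ > 0`), then the update
`x⁺ = x - η • P (∇f x)` decreases `f` by at least `(ρ η / 2) ‖∇f x‖²`. -/
theorem subspace_descent_step_guarantee
    {E : Type*} [NormedAddCommGroup E] [InnerProductSpace ℝ E] [FiniteDimensional ℝ E]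
    (f : E → ℝ) (hf : Differentiable ℝ f)
    (L : ℝ) (hL : 0 < L)
    (hlip : ∀ x y : E, ‖gradient f x - gradient f y‖ ≤ L * ‖x - y‖)
    (Pr : E →L[ℝ] E)
    (hPidem : ∀ x : E, Pr (Pr x) = Pr x)
    (hPsa : ∀ x y : E, ⟪Pr x, y⟫ = ⟪x, Pr y⟫)
    (ρ η : ℝ) (hρ : 0 < ρ) (hη : 0 < η) (hηL : η ≤ 1 / L)
    (x : E)
    (hmass : ‖Pr (gradient f x)‖ ^ 2 ≥ ρ * ‖gradient f x‖ ^ 2) :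
    f (x - η • Pr (gradient f x)) - f x ≤ -(ρ * η / 2) * ‖gradient f x‖ ^ 2 := by
  set g := gradient f x with hgdef
  have key := descent_lemma_aux f hf L hL hlip x (-(η • Pr g))
  rw [← sub_eq_add_neg] at key
  have hinner : ⟪g, -(η • Pr g)⟫ = -(η * ‖Pr g‖ ^ 2) := by
    have h1 : ⟪g, Pr g⟫ = ‖Pr g‖ ^ 2 := by
      have := hPsa g (Pr g)
      rw [hPidem] at this
      rw [← this, real_inner_self_eq_norm_sq]
    rw [inner_neg_right, real_inner_smul_right, h1]
  have hnorm : ‖-(η • Pr g)‖ ^ 2 = η ^ 2 * ‖Pr g‖ ^ 2 := by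
    rw [norm_neg, norm_smul]
    simp [abs_of_pos hη, mul_pow]
  rw [hinner, hnorm] at key
  have hLη : L * η ≤ 1 := by
    rw [le_div_iff₀ hL] at hηL
    linarith
  have hPg : 0 ≤ ‖Pr g‖ ^ 2 := by positivity
  nlinarith [hmass, mul_pos hη hη]
end
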